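/- The Gaussian zeta function ζ_{ℤ[i]}(s) := ∑_{n ∈ ℤ[i], n ≠ 0} N(n)^{-s} satisfies, for real s > 1 with s sufficiently close to 1: ζ_{ℤ[i]}(s) = π/(s-1) + O(1). In particular ζ_{ℤ[i]}(s) (s-1) → π as s → 1⁺. -/

import Mathlib

open scoped Topology

open MeasureTheory Set Filter
open scoped ENNReal

/-- The Gaussian zeta function `ζ_{ℤ[i]}(s) = ∑_{n ≠ 0} N(n)^{-s}`. -/
noncomputable def gaussianZeta (s : ℝ) : ℝ :=
  ∑' n : {n : GaussianInt // n ≠ 0}, ((n.1.norm.natAbs : ℝ)) ^ (-s)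

namespace GZaux

/-- index type: nonzero Gaussian integers as pairs -/
abbrev P := {p : ℤ × ℤ // p ≠ 0}

/-- real norm -/
noncomputable def N (p : ℤ × ℤ) : ℝ := (p.1 : ℝ) ^ 2 + (p.2 : ℝ) ^ 2

lemma N_nonneg (p : ℤ × ℤ) : 0 ≤ N p := by unfold N; positivity

lemma one_le_N (p : P) : 1 ≤ N p.1 := by
  obtain ⟨⟨a, b⟩, hp⟩ := p
  have h : a ≠ 0 ∨ b ≠ 0 := by
    by_contra h; push_neg at h; exact hp (Prod.ext h.1 h.2)
  have h1 : ∀ n : ℤ, n ≠ 0 → (1 : ℝ) ≤ (n : ℝ) ^ 2 := by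
    intro n hn
    have h2 : (1 : ℤ) ≤ |n| := Int.one_le_abs hn
    have : (1 : ℤ) ≤ n ^ 2 := by nlinarith [abs_nonneg n, sq_abs n]
    calc (1:ℝ) ≤ ((n^2 : ℤ) : ℝ) := by exact_mod_cast this
    _ = (n:ℝ)^2 := by push_cast; ring
  rcases h with h | h
  · have := h1 a h; have : (0:ℝ) ≤ (b:ℝ)^2 := by positivity
    simp only [N]; nlinarith [h1 a h]
  · simp only [N]; nlinarith [h1 b h, sq_nonneg ((a:ℝ))]

/-- the corresponding complex point -/
noncomputable def c (p : ℤ × ℤ) : ℂ := ⟨(p.1 : ℝ), (p.2 : ℝ)⟩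

lemma abs_c_sq (p : ℤ × ℤ) : ‖c p‖ ^ 2 = N p := by
  rw [Complex.sq_norm, Complex.normSq_apply]; simp [c, N, sq]

/-- the unit square attached to a lattice point -/
def Q (p : ℤ × ℤ) : Set ℂ :=
  Complex.measurableEquivRealProd ⁻¹'
    (Ico (p.1 : ℝ) (p.1 + 1) ×ˢ Ico (p.2 : ℝ) (p.2 + 1))

lemma mem_Q {p : ℤ × ℤ} {z : ℂ} :
    z ∈ Q p ↔ (⌊z.re⌋ = p.1 ∧ ⌊z.im⌋ = p.2) := by
  simp only [Q, mem_preimage, Complex.measurableEquivRealProd_apply, mem_prod, mem_Ico]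
  constructor
  · rintro ⟨⟨h1, h2⟩, h3, h4⟩
    exact ⟨Int.floor_eq_iff.2 ⟨h1, by push_cast; linarith⟩,
           Int.floor_eq_iff.2 ⟨h3, by push_cast; linarith⟩⟩
  · rintro ⟨h1, h2⟩
    rw [← h1, ← h2]
    have := Int.floor_le z.re; have := Int.lt_floor_add_one z.re
    have := Int.floor_le z.im; have := Int.lt_floor_add_one z.im
    push_cast at *
    exact ⟨⟨by linarith, by linarith⟩, by linarith, by linarith⟩

lemma measurableSet_Q (p : ℤ × ℤ) : MeasurableSet (Q p) :=
  Complex.measurableEquivRealProd.measurable (measurableSet_Ico.prod measurableSet_Ico)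

lemma volume_Q (p : ℤ × ℤ) : volume (Q p) = 1 := by
  rw [Q, Complex.volume_preserving_equiv_real_prod.measure_preimage
    ((measurableSet_Ico.prod measurableSet_Ico).nullMeasurableSet)]
  rw [MeasureTheory.Measure.volume_eq_prod, MeasureTheory.Measure.prod_prod,
    Real.volume_Ico, Real.volume_Ico]
  simp

lemma Q_disjoint : Pairwise (Function.onFun Disjoint Q) := by
  intro p q hpq
  rw [Function.onFun, Set.disjoint_left]
  intro z hz hz'
  rw [mem_Q] at hz hz'
  exact hpq (Prod.ext (hz.1 ▸ hz'.1) (hz.2 ▸ hz'.2))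

lemma dist_le_of_mem_Q {p : ℤ × ℤ} {z : ℂ} (hz : z ∈ Q p) :
    ‖z - c p‖ ≤ 2 := by
  rw [mem_Q] at hz
  have h1 : |(z - c p).re| ≤ 1 := by
    have := Int.floor_le z.re
    have := Int.lt_floor_add_one z.re
    rw [hz.1] at *
    simp only [Complex.sub_re, c]
    rw [abs_le]; constructor <;> [linarith; linarith]
  have h2 : |(z - c p).im| ≤ 1 := by
    have := Int.floor_le z.im
    have := Int.lt_floor_add_one z.im
    rw [hz.2] at *
    simp only [Complex.sub_im, c]
    rw [abs_le]; constructor <;> [linarith; linarith]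
  calc ‖z - c p‖ ≤ |(z - c p).re| + |(z - c p).im| :=
        Complex.norm_le_abs_re_add_abs_im _
  _ ≤ 2 := by linarith

/-- the set of nonzero lattice points with norm at most `t` -/
def A (t : ℝ) : Set P := {p : P | N p.1 ≤ t}

lemma B_finite (t : ℝ) : {q : ℤ × ℤ | N q ≤ t}.Finite := by
  rcases le_or_gt 0 t with ht | ht
  · set M : ℤ := ⌈Real.sqrt t⌉ with hM
    have hM0 : (0:ℝ) ≤ (M:ℝ) := by
      have := Real.sqrt_nonneg t
      have := Int.le_ceil (Real.sqrt t)
      linarith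
    apply Set.Finite.subset (Set.finite_Icc (α := ℤ × ℤ) (-M, -M) (M, M))
    intro q hq
    simp only [mem_setOf_eq, N] at hq
    have hsq : Real.sqrt t ≤ (M:ℝ) := Int.le_ceil _
    have ht2 : t ≤ (M:ℝ)^2 := by nlinarith [Real.sq_sqrt ht, Real.sqrt_nonneg t]
    have h1 : |(q.1:ℝ)| ≤ (M:ℝ) := by nlinarith [sq_abs ((q.1:ℝ)), abs_nonneg ((q.1:ℝ)), sq_nonneg ((q.2:ℝ))]
    have h2 : |(q.2:ℝ)| ≤ (M:ℝ) := by nlinarith [sq_abs ((q.2:ℝ)), abs_nonneg ((q.2:ℝ)), sq_nonneg ((q.1:ℝ))]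
    have h1' : |q.1| ≤ M := by
      have : ((|q.1| : ℤ) : ℝ) ≤ (M:ℝ) := by rw [Int.cast_abs]; exact h1
      exact_mod_cast this
    have h2' : |q.2| ≤ M := by
      have : ((|q.2| : ℤ) : ℝ) ≤ (M:ℝ) := by rw [Int.cast_abs]; exact h2
      exact_mod_cast this
    rw [abs_le] at h1' h2'
    exact Set.mem_Icc.2 ⟨⟨h1'.1, h2'.1⟩, ⟨h1'.2, h2'.2⟩⟩
  · convert Set.finite_empty
    ext q
    simp only [mem_setOf_eq, mem_empty_iff_false, iff_false, not_le]
    exact lt_of_lt_of_le ht (N_nonneg q)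

lemma A_finite (t : ℝ) : (A t).Finite := by
  have : A t = Subtype.val ⁻¹' {q : ℤ × ℤ | N q ≤ t} := rfl
  rw [this]
  exact Set.Finite.preimage (Subtype.val_injective.injOn) (B_finite t)

/-- counting function, as an `ℝ≥0∞`-valued sum of indicators -/
noncomputable def R (t : ℝ) : ℝ≥0∞ :=
  ∑' p : P, (Ici (N p.1)).indicator (fun _ => (1 : ℝ≥0∞)) t

lemma R_eq_card (t : ℝ) : R t = ((A_finite t).toFinset.card : ℝ≥0∞) := by
  rw [R, tsum_eq_sum (s := (A_finite t).toFinset) ?h]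
  · rw [Finset.card_eq_sum_ones, Nat.cast_sum]
    apply Finset.sum_congr rfl
    intro p hp
    rw [Set.Finite.mem_toFinset] at hp
    have hp' : N p.1 ≤ t := hp
    simp [Set.indicator_of_mem (mem_Ici.2 hp')]
  · intro p hp
    rw [Set.Finite.mem_toFinset] at hp
    exact Set.indicator_of_notMem (by simpa [mem_Ici, A, mem_setOf_eq] using hp) _


lemma abs_c_eq (p : ℤ × ℤ) : ‖c p‖ = Real.sqrt (N p) := by
  rw [← abs_c_sq, Real.sqrt_sq (norm_nonneg _)]

lemma card_bound {t : ℝ} (ht : 1 ≤ t) :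
    |(((A_finite t).toFinset.card : ℝ)) - Real.pi * t| ≤ 40 * Real.sqrt t := by
  set F := (A_finite t).toFinset with hF
  set r := Real.sqrt t with hr
  have hr1 : 1 ≤ r := by
    rw [hr, show (1:ℝ) = Real.sqrt 1 from (Real.sqrt_one).symm]
    exact Real.sqrt_le_sqrt ht
  have hrt : r ^ 2 = t := Real.sq_sqrt (by linarith)
  have hdisj : (↑F : Set P).PairwiseDisjoint (fun p : P => Q p.1) := by
    intro a _ b _ hab
    exact Q_disjoint (fun h => hab (Subtype.ext h))
  have hUnion_vol : volume (⋃ p ∈ F, Q (p : P).1) = (F.card : ℝ≥0∞) := by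
    rw [measure_biUnion_finset hdisj (fun p _ => measurableSet_Q _)]
    simp [volume_Q]
  have hpi : ((NNReal.pi : ℝ≥0∞)) = ENNReal.ofReal Real.pi := by
    rw [← NNReal.coe_real_pi, ENNReal.ofReal_coe_nnreal]
  -- upper bound
  have hsub : (⋃ p ∈ F, Q (p : P).1) ⊆ Metric.closedBall 0 (r + 2) := by
    intro z hz
    rw [Set.mem_iUnion₂] at hz
    obtain ⟨p, hp, hz⟩ := hz
    have hNp : N p.1 ≤ t := by rw [hF, Set.Finite.mem_toFinset] at hp; exact hp
    have h1 : ‖c p.1‖ ≤ r := by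
      rw [abs_c_eq]; exact Real.sqrt_le_sqrt hNp
    have h2 := dist_le_of_mem_Q hz
    rw [Metric.mem_closedBall, Complex.dist_eq, sub_zero]
    calc ‖z‖ = ‖(z - c p.1) + c p.1‖ := by ring_nf
    _ ≤ ‖z - c p.1‖ + ‖c p.1‖ := norm_add_le _ _
    _ ≤ r + 2 := by linarith
  have upper : (F.card : ℝ) ≤ (r + 2) ^ 2 * Real.pi := by
    have he : (F.card : ℝ≥0∞) ≤ ENNReal.ofReal ((r + 2) ^ 2 * Real.pi) := by
      rw [← hUnion_vol]
      refine (measure_mono hsub).trans_eq ?_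
      rw [Complex.volume_closedBall, hpi, ← ENNReal.ofReal_pow (by linarith),
        ← ENNReal.ofReal_mul (by positivity)]
    have : ENNReal.ofReal ((F.card : ℝ)) ≤ ENNReal.ofReal ((r + 2) ^ 2 * Real.pi) := by
      rwa [ENNReal.ofReal_natCast]
    exact (ENNReal.ofReal_le_ofReal_iff (by positivity)).1 this
  -- lower bound
  have hball : Metric.ball (0 : ℂ) (r - 2) ⊆ Q 0 ∪ ⋃ p ∈ F, Q (p : P).1 := by
    intro z hz
    rw [Metric.mem_ball, Complex.dist_eq, sub_zero] at hz
    set p : ℤ × ℤ := (⌊z.re⌋, ⌊z.im⌋) with hp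
    have hzQ : z ∈ Q p := mem_Q.2 ⟨rfl, rfl⟩
    by_cases h0 : p = 0
    · left; rwa [h0] at hzQ
    · right
      rw [Set.mem_iUnion₂]
      have h2 := dist_le_of_mem_Q hzQ
      have h3 : ‖c p‖ ≤ ‖z‖ + 2 := by
        calc ‖c p‖ = ‖z - (z - c p)‖ := by ring_nf
        _ = ‖z + -(z - c p)‖ := by ring_nf
        _ ≤ ‖z‖ + ‖-(z - c p)‖ := norm_add_le _ _
        _ = ‖z‖ + ‖z - c p‖ := by rw [norm_neg]
        _ ≤ ‖z‖ + 2 := by linarith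
      have habs : ‖c p‖ ≤ r := by linarith
      have hN : N p ≤ t := by
        nlinarith [abs_c_sq p, norm_nonneg (c p)]
      exact ⟨⟨p, h0⟩, by rw [hF, Set.Finite.mem_toFinset]; exact hN, hzQ⟩
  have lower : Real.pi * t - 40 * r ≤ (F.card : ℝ) := by
    rcases le_or_gt 2 r with h2r | h2r
    · have he : ENNReal.ofReal ((r - 2) ^ 2 * Real.pi) ≤ ENNReal.ofReal (1 + (F.card : ℝ)) := by
        calc ENNReal.ofReal ((r - 2) ^ 2 * Real.pi)
            = volume (Metric.ball (0 : ℂ) (r - 2)) := by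
              rw [Complex.volume_ball, hpi, ← ENNReal.ofReal_pow (by linarith),
                ← ENNReal.ofReal_mul (by positivity)]
        _ ≤ volume (Q 0 ∪ ⋃ p ∈ F, Q (p : P).1) := measure_mono hball
        _ ≤ volume (Q 0) + volume (⋃ p ∈ F, Q (p : P).1) := measure_union_le _ _
        _ = 1 + (F.card : ℝ≥0∞) := by rw [volume_Q, hUnion_vol]
        _ = ENNReal.ofReal (1 + (F.card : ℝ)) := by
              rw [ENNReal.ofReal_add (by norm_num) (by positivity), ENNReal.ofReal_one,
                ENNReal.ofReal_natCast]
      have hre : (r - 2) ^ 2 * Real.pi ≤ 1 + (F.card : ℝ) :=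
        (ENNReal.ofReal_le_ofReal_iff (by positivity)).1 he
      nlinarith [Real.pi_le_four, Real.pi_pos]
    · have hc : (0:ℝ) ≤ (F.card : ℝ) := by positivity
      nlinarith [Real.pi_le_four, Real.pi_pos]
  rw [abs_le]
  constructor
  · nlinarith [Real.pi_le_four, Real.pi_pos]
  · nlinarith [Real.pi_le_four, Real.pi_pos]

lemma measurable_g (s : ℝ) : Measurable fun t : ℝ => ENNReal.ofReal (t ^ (-s - 1)) :=
by fun_prop

lemma measurable_R : Measurable R := by
  apply Measurable.ennreal_tsum
  intro p
  exact measurable_const.indicator measurableSet_Ici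

lemma R_ne_top (t : ℝ) : R t ≠ ⊤ := by
  rw [R_eq_card]; exact ENNReal.natCast_ne_top _

lemma per_point (s : ℝ) (hs1 : 1 < s) (p : P) :
    ∫⁻ t in Ioi (1 : ℝ), (Ici (N p.1)).indicator (fun _ => (1 : ℝ≥0∞)) t
        * ENNReal.ofReal (t ^ (-s - 1))
      = ENNReal.ofReal ((N p.1) ^ (-s) / s) := by
  set c₀ := N p.1 with hc₀
  have hc : 1 ≤ c₀ := one_le_N p
  have hind : ∀ t : ℝ, (Ici c₀).indicator (fun _ => (1 : ℝ≥0∞)) t * ENNReal.ofReal (t ^ (-s - 1))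
      = (Ici c₀).indicator (fun u => ENNReal.ofReal (u ^ (-s - 1))) t := by
    intro t
    by_cases h : t ∈ Ici c₀ <;> simp [Set.indicator_of_mem, Set.indicator_of_notMem, h]
  rw [lintegral_congr hind, lintegral_indicator measurableSet_Ici,
    Measure.restrict_restrict measurableSet_Ici]
  have hset : (Ici c₀ ∩ Ioi 1 : Set ℝ) =ᵐ[volume] Ioi c₀ := by
    apply Filter.eventuallyEq_of_mem (s := {c₀}ᶜ)
    · rw [mem_ae_iff]; simp
    · intro t ht
      simp only [Set.mem_compl_iff, Set.mem_singleton_iff] at ht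
      simp only [Set.mem_inter_iff, mem_Ici, mem_Ioi, eq_iff_iff]
      constructor
      · rintro ⟨h1, h2⟩; exact lt_of_le_of_ne h1 (Ne.symm ht)
      · intro h; exact ⟨le_of_lt h, lt_of_le_of_lt hc h⟩
  rw [setLIntegral_congr hset,
    ← ofReal_integral_eq_lintegral_ofReal
      (integrableOn_Ioi_rpow_of_lt (by linarith) (by linarith))
      ((ae_restrict_iff' measurableSet_Ioi).2 (Filter.Eventually.of_forall
        (fun t ht => Real.rpow_nonneg (by have := mem_Ioi.1 ht; linarith) _))),
    integral_Ioi_rpow_of_lt (by linarith) (by linarith)]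
  congr 1
  have h1 : -s - 1 + 1 = -s := by ring
  rw [h1, neg_div, div_neg, neg_neg]

lemma key (s : ℝ) (hs1 : 1 < s) :
    (∑' p : P, ENNReal.ofReal ((N p.1) ^ (-s))) =
      ENNReal.ofReal s * ∫⁻ t in Ioi (1 : ℝ), R t * ENNReal.ofReal (t ^ (-s - 1)) := by
  have hswap : ∫⁻ t in Ioi (1 : ℝ), R t * ENNReal.ofReal (t ^ (-s - 1))
      = ∑' p : P, ∫⁻ t in Ioi (1 : ℝ),
          (Ici (N p.1)).indicator (fun _ => (1 : ℝ≥0∞)) t * ENNReal.ofReal (t ^ (-s - 1)) := by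
    rw [← lintegral_tsum (μ := volume.restrict (Ioi (1 : ℝ))) (f := fun (p : P) (t : ℝ) => (Ici (N p.1)).indicator (fun _ => (1 : ℝ≥0∞)) t
      * ENNReal.ofReal (t ^ (-s - 1))) (fun p => ((measurable_const.indicator measurableSet_Ici).mul
      (measurable_g s)).aemeasurable)]
    apply lintegral_congr
    intro t
    rw [R, ENNReal.tsum_mul_right]
  rw [hswap, ← ENNReal.tsum_mul_left]
  apply tsum_congr
  intro p
  rw [per_point s hs1 p, ← ENNReal.ofReal_mul (by linarith)]
  congr 1
  field_simp

noncomputable def phi (t : ℝ) : ℝ := ((A_finite t).toFinset.card : ℝ)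

lemma R_toReal (t : ℝ) : (R t).toReal = phi t := by
  rw [R_eq_card]; simp [phi]

lemma phi_nonneg (t : ℝ) : 0 ≤ phi t := by unfold phi; positivity

lemma phi_bound {t : ℝ} (ht : 1 ≤ t) : |phi t - Real.pi * t| ≤ 40 * Real.sqrt t :=
  card_bound ht

/-- the equivalence between nonzero Gaussian integers and nonzero pairs -/
def e : {n : GaussianInt // n ≠ 0} ≃ P where
  toFun n := ⟨(n.1.re, n.1.im), fun h => n.2 (by
    rw [Prod.ext_iff] at h
    exact Zsqrtd.ext_iff.2 ⟨h.1, h.2⟩)⟩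
  invFun p := ⟨⟨p.1.1, p.1.2⟩, fun h => p.2 (by
    rw [Zsqrtd.ext_iff] at h
    exact Prod.ext h.1 h.2)⟩
  left_inv n := rfl
  right_inv p := rfl

lemma norm_cast_eq (n : {n : GaussianInt // n ≠ 0}) :
    ((n.1.norm.natAbs : ℝ)) = N ((e n).1) := by
  have h1 : ((n.1.norm.natAbs : ℝ)) = |((n.1.norm : ℤ) : ℝ)| := by
    rw [Nat.cast_natAbs]; push_cast; ring
  rw [h1, abs_of_nonneg (by exact_mod_cast GaussianInt.norm_nonneg n.1)]
  rw [Zsqrtd.norm_def]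
  show (((n.1.re * n.1.re - (-1) * n.1.im * n.1.im : ℤ)) : ℝ) = (n.1.re : ℝ)^2 + (n.1.im:ℝ)^2
  push_cast; ring

lemma gz_eq_tsum (s : ℝ) : gaussianZeta s = ∑' p : P, (N p.1) ^ (-s) := by
  rw [gaussianZeta, ← Equiv.tsum_eq e (fun p : P => (N p.1) ^ (-s))]
  exact tsum_congr fun n => by rw [norm_cast_eq]

lemma main_est {s : ℝ} (hs1 : 1 < s) (hs2 : s < 2) :
    |gaussianZeta s - Real.pi / (s - 1)| ≤ 200 := by
  have hs0 : (0:ℝ) < s := by linarith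
  set J := ∫⁻ t in Ioi (1:ℝ), R t * ENNReal.ofReal (t ^ (-s - 1)) with hJ
  -- pointwise identities on Ioi 1
  have hts : ∀ t : ℝ, 0 < t → t * t ^ (-s - 1) = t ^ (-s) := by
    intro t ht
    calc t * t ^ (-s - 1) = t ^ (1:ℝ) * t ^ (-s - 1) := by rw [Real.rpow_one]
    _ = t ^ (1 + (-s - 1)) := (Real.rpow_add ht _ _).symm
    _ = t ^ (-s) := by congr 1; ring
  have htsq : ∀ t : ℝ, 0 < t → Real.sqrt t * t ^ (-s - 1) = t ^ (-s - 1/2) := by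
    intro t ht
    calc Real.sqrt t * t ^ (-s - 1) = t ^ ((1:ℝ)/2) * t ^ (-s - 1) := by rw [Real.sqrt_eq_rpow]
    _ = t ^ (1/2 + (-s - 1)) := (Real.rpow_add ht _ _).symm
    _ = t ^ (-s - 1/2) := by congr 1; ring
  -- integrability of comparison functions
  have hint_pow : ∀ a : ℝ, a < -1 → IntegrableOn (fun t : ℝ => t ^ a) (Ioi 1) :=
    fun a ha => integrableOn_Ioi_rpow_of_lt ha one_pos
  have hint_pi : IntegrableOn (fun t : ℝ => Real.pi * t ^ (-s)) (Ioi 1) :=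
    (hint_pow (-s) (by linarith)).const_mul _
  have hint_40 : IntegrableOn (fun t : ℝ => 40 * t ^ (-s - 1/2)) (Ioi 1) :=
    (hint_pow (-s - 1/2) (by linarith)).const_mul _
  have hval_pow : ∀ a : ℝ, a < -1 → ∫ t in Ioi (1:ℝ), t ^ a = -1 / (a + 1) := by
    intro a ha
    rw [integral_Ioi_rpow_of_lt ha one_pos, Real.one_rpow, neg_div]
  -- J is finite
  have hJ_le : J ≤ ENNReal.ofReal (Real.pi / (s - 1) + 80) := by
    have step1 : J ≤ ∫⁻ t in Ioi (1:ℝ),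
        ENNReal.ofReal (Real.pi * t ^ (-s) + 40 * t ^ (-s - 1/2)) := by
      apply setLIntegral_mono' measurableSet_Ioi
      intro t ht
      have ht1 : (1:ℝ) ≤ t := le_of_lt ht
      have ht0 : (0:ℝ) < t := by linarith
      have hb := phi_bound ht1
      have hb' : phi t ≤ Real.pi * t + 40 * Real.sqrt t := by
        have := (abs_le.1 hb).2; linarith
      have hpow0 : (0:ℝ) ≤ t ^ (-s - 1) := Real.rpow_nonneg (le_of_lt ht0) _
      calc R t * ENNReal.ofReal (t ^ (-s - 1))
          = ENNReal.ofReal (phi t) * ENNReal.ofReal (t ^ (-s - 1)) := by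
            rw [R_eq_card]; rw [phi, ENNReal.ofReal_natCast]
      _ = ENNReal.ofReal (phi t * t ^ (-s - 1)) := by
            rw [ENNReal.ofReal_mul (phi_nonneg t)]
      _ ≤ ENNReal.ofReal ((Real.pi * t + 40 * Real.sqrt t) * t ^ (-s - 1)) := by
            apply ENNReal.ofReal_le_ofReal
            exact mul_le_mul_of_nonneg_right hb' hpow0
      _ = ENNReal.ofReal (Real.pi * t ^ (-s) + 40 * t ^ (-s - 1/2)) := by
            congr 1
            rw [add_mul, mul_assoc, mul_assoc, hts t ht0, htsq t ht0]
    refine step1.trans ?_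
    have hadd : IntegrableOn (fun t : ℝ => Real.pi * t ^ (-s) + 40 * t ^ (-s - 1/2)) (Ioi 1) :=
      hint_pi.add hint_40
    rw [← ofReal_integral_eq_lintegral_ofReal hadd
      ((ae_restrict_iff' measurableSet_Ioi).2 (Filter.Eventually.of_forall (fun t ht => by
        have ht0 : (0:ℝ) < t := lt_trans one_pos ht
        have h1 : (0:ℝ) ≤ t ^ (-s) := Real.rpow_nonneg (le_of_lt ht0) _
        have h2 : (0:ℝ) ≤ t ^ (-s - 1/2) := Real.rpow_nonneg (le_of_lt ht0) _
        have h3 := mul_nonneg (le_of_lt Real.pi_pos) h1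
        have h4 := mul_nonneg (by norm_num : (0:ℝ) ≤ 40) h2
        show (0:ℝ) ≤ Real.pi * t ^ (-s) + 40 * t ^ (-s - 1/2)
        linarith)))]
    apply ENNReal.ofReal_le_ofReal
    rw [integral_add hint_pi hint_40, integral_const_mul, integral_const_mul,
      hval_pow (-s) (by linarith), hval_pow (-s - 1/2) (by linarith)]
    have h1 : (-1:ℝ) / (-s + 1) = 1 / (s - 1) := by
      rw [div_eq_div_iff (ne_of_lt (by linarith : (-s+1:ℝ) < 0))
        (ne_of_gt (by linarith : (0:ℝ) < s-1))]
      ring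
    have h2 : (-1:ℝ) / (-s - 1/2 + 1) = 1 / (s - 1/2) := by
      rw [div_eq_div_iff (ne_of_lt (by linarith : (-s-1/2+1:ℝ) < 0))
        (ne_of_gt (by linarith : (0:ℝ) < s-1/2))]
      ring
    rw [h1, h2]
    have h3 : 40 * (1 / (s - 1/2)) ≤ 80 := by
      rw [mul_one_div, div_le_iff₀ (by linarith)]; linarith
    have : Real.pi * (1 / (s-1)) = Real.pi / (s-1) := by ring
    linarith [this]
  have hJfin : J ≠ ⊤ := ne_top_of_le_ne_top ENNReal.ofReal_ne_top hJ_le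
  -- measurability
  have hmeas : AEMeasurable (fun t : ℝ => R t * ENNReal.ofReal (t ^ (-s - 1)))
      (volume.restrict (Ioi 1)) :=
    (measurable_R.mul (measurable_g s)).aemeasurable
  -- J as a real integral
  have hJ_toReal : J.toReal = ∫ t in Ioi (1:ℝ), phi t * t ^ (-s - 1) := by
    rw [hJ, ← integral_toReal hmeas (Filter.Eventually.of_forall (fun t =>
      ENNReal.mul_lt_top (R_ne_top t).lt_top ENNReal.ofReal_lt_top))]
    apply setIntegral_congr_fun measurableSet_Ioi
    intro t ht
    have ht0 : (0:ℝ) < t := lt_trans one_pos ht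
    show (R t * ENNReal.ofReal (t ^ (-s - 1))).toReal = phi t * t ^ (-s - 1)
    rw [ENNReal.toReal_mul, R_toReal, ENNReal.toReal_ofReal (Real.rpow_nonneg (le_of_lt ht0) _)]
  -- integrability of phi * t^(-s-1)
  have hphi_int : IntegrableOn (fun t : ℝ => phi t * t ^ (-s - 1)) (Ioi 1) := by
    have h := integrable_toReal_of_lintegral_ne_top hmeas (hJ ▸ hJfin)
    apply h.congr
    apply (ae_restrict_iff' measurableSet_Ioi).2
    apply Filter.Eventually.of_forall
    intro t ht
    have ht0 : (0:ℝ) < t := lt_trans one_pos ht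
    show (R t * ENNReal.ofReal (t ^ (-s - 1))).toReal = phi t * t ^ (-s - 1)
    rw [ENNReal.toReal_mul, R_toReal, ENNReal.toReal_ofReal (Real.rpow_nonneg (le_of_lt ht0) _)]
  -- the central estimate on J.toReal
  have hest : |J.toReal - Real.pi / (s - 1)| ≤ 80 := by
    have hsub : ∫ t in Ioi (1:ℝ), (phi t * t ^ (-s - 1) - Real.pi * t ^ (-s))
        = J.toReal - Real.pi / (s - 1) := by
      rw [integral_sub hphi_int hint_pi, hJ_toReal, integral_const_mul,
        hval_pow (-s) (by linarith)]
      have hd : (-1:ℝ)/(-s+1) = 1/(s-1) := by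
        rw [div_eq_div_iff (ne_of_lt (by linarith : (-s+1:ℝ) < 0))
          (ne_of_gt (by linarith : (0:ℝ) < s-1))]
        ring
      rw [hd]
      congr 1
      ring
    have hb : |∫ t in Ioi (1:ℝ), (phi t * t ^ (-s - 1) - Real.pi * t ^ (-s))|
        ≤ ∫ t in Ioi (1:ℝ), 40 * t ^ (-s - 1/2) := by
      rw [← Real.norm_eq_abs]
      apply norm_integral_le_of_norm_le hint_40
      apply (ae_restrict_iff' measurableSet_Ioi).2
      apply Filter.Eventually.of_forall
      intro t ht
      have ht1 : (1:ℝ) ≤ t := le_of_lt ht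
      have ht0 : (0:ℝ) < t := by linarith
      have hpow0 : (0:ℝ) ≤ t ^ (-s - 1) := Real.rpow_nonneg (le_of_lt ht0) _
      have key : phi t * t ^ (-s - 1) - Real.pi * t ^ (-s)
          = (phi t - Real.pi * t) * t ^ (-s - 1) := by
        rw [sub_mul, mul_assoc, hts t ht0]
      rw [Real.norm_eq_abs, key, abs_mul, abs_of_nonneg hpow0]
      calc |phi t - Real.pi * t| * t ^ (-s - 1) ≤ (40 * Real.sqrt t) * t ^ (-s - 1) :=
            mul_le_mul_of_nonneg_right (phi_bound ht1) hpow0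
      _ = 40 * t ^ (-s - 1/2) := by rw [mul_assoc, htsq t ht0]
    rw [hsub] at hb
    have h40 : ∫ t in Ioi (1:ℝ), 40 * t ^ (-s - 1/2) ≤ 80 := by
      rw [integral_const_mul, hval_pow (-s - 1/2) (by linarith)]
      have h2 : -1 / (-s - 1/2 + 1) = 1 / (s - 1/2) := by
        rw [div_eq_div_iff (by linarith) (by linarith)]; ring
      rw [h2, mul_one_div, div_le_iff₀ (by linarith)]; linarith
    exact hb.trans h40
  -- gaussianZeta in terms of J
  have hgz : gaussianZeta s = s * J.toReal := by
    rw [gz_eq_tsum]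
    have h1 : ∑' p : P, (N p.1) ^ (-s)
        = (∑' p : P, ENNReal.ofReal ((N p.1) ^ (-s))).toReal := by
      rw [ENNReal.tsum_toReal_eq (fun p => ENNReal.ofReal_ne_top)]
      exact tsum_congr fun p =>
        (ENNReal.toReal_ofReal (Real.rpow_nonneg (N_nonneg p.1) _)).symm
    rw [h1, key s hs1, ENNReal.toReal_mul, ENNReal.toReal_ofReal (le_of_lt hs0)]
  -- finish
  rw [hgz]
  have hpi4 := Real.pi_le_four
  have hpi0 := Real.pi_pos
  have hid : s * J.toReal - Real.pi / (s - 1)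
      = s * (J.toReal - Real.pi / (s - 1)) + Real.pi := by
    have h : Real.pi / (s - 1) * (s - 1) = Real.pi :=
      div_mul_cancel₀ _ (ne_of_gt (by linarith : (0:ℝ) < s - 1))
    nlinarith [h]
  rw [hid]
  have habs := abs_le.1 hest
  rw [abs_le]
  constructor <;> nlinarith [habs.1, habs.2]

end GZaux

/-- For real `s > 1` near `1`, `ζ_{ℤ[i]}(s) = π/(s-1) + O(1)`; in particular
`(s-1) ζ_{ℤ[i]}(s) → π` as `s → 1⁺`. -/
theorem gaussianZeta_pole :
    (∃ C δ : ℝ, 0 < C ∧ 0 < δ ∧ ∀ s : ℝ, 1 < s → s < 1 + δ →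
      |gaussianZeta s - Real.pi / (s - 1)| ≤ C) ∧
    Filter.Tendsto (fun s : ℝ => gaussianZeta s * (s - 1))
      (𝓝[>] 1) (𝓝 Real.pi) := by
  constructor
  · exact ⟨200, 1, by norm_num, by norm_num,
      fun s hs1 hs2 => GZaux.main_est hs1 (by linarith)⟩
  · rw [← tendsto_sub_nhds_zero_iff]
    have h0 : Tendsto (fun s : ℝ => 200 * (s - 1)) (𝓝[>] (1:ℝ)) (𝓝 0) := by
      have h1 : Tendsto (fun s : ℝ => 200 * (s - 1)) (𝓝 (1:ℝ)) (𝓝 0) := by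
        have hc : Continuous (fun s : ℝ => 200 * (s - 1)) := by continuity
        have := hc.tendsto (1:ℝ)
        simpa using this
      exact h1.mono_left nhdsWithin_le_nhds
    apply squeeze_zero_norm' ?_ h0
    have hmem : Set.Ioo (1:ℝ) 2 ∈ 𝓝[>] (1:ℝ) :=
      Ioo_mem_nhdsGT_of_mem ⟨le_refl 1, one_lt_two⟩
    filter_upwards [hmem] with s hs
    obtain ⟨hs1, hs2⟩ := hs
    have hne : s - 1 ≠ 0 := ne_of_gt (by linarith)
    have hid : gaussianZeta s * (s - 1) - Real.pi
        = (gaussianZeta s - Real.pi / (s - 1)) * (s - 1) := by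
      rw [sub_mul, div_mul_cancel₀ _ hne]
    rw [Real.norm_eq_abs, hid, abs_mul, abs_of_pos (by linarith : (0:ℝ) < s - 1)]
    exact mul_le_mul_of_nonneg_right (GZaux.main_est hs1 hs2) (by linarith)
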